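/- The function η(ρ, s) = −ρ log(s) is convex as a function of the conservative variables for a perfect gas: more precisely, for a γ-law gas with s = p/ρ^γ, the map (ρ, m, Ẽ) ↦ −ρ log( (γ−1)(Ẽ − m²/(2ρ)) / ρ^γ ) is convex on the domain {ρ > 0, Ẽ − m²/(2ρ) > 0}, where m = ρu and Ẽ = ρE. -/

import Mathlib

/-- Log-sum inequality: `(a+c) log((a+c)/(b+d)) ≤ a log(a/b) + c log(c/d)`. -/
lemma log_sum_ineq {a b c d : ℝ} (ha : 0 < a) (hb : 0 < b) (hc : 0 < c) (hd : 0 < d) :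
    (a + c) * Real.log ((a + c) / (b + d)) ≤ a * Real.log (a / b) + c * Real.log (c / d) := by
  set r : ℝ := (a + c) / (b + d) with hrdef
  have hbd : 0 < b + d := by linarith
  have hr : 0 < r := div_pos (by linarith) hbd
  have key : ∀ x y : ℝ, 0 < x → 0 < y →
      x * Real.log r ≤ x * Real.log (x / y) + (r * y - x) := by
    intro x y hx hy
    have h1 : Real.log (r * y / x) ≤ r * y / x - 1 :=
      Real.log_le_sub_one_of_pos (by positivity)
    have h2 : Real.log (r * y / x) = Real.log r - Real.log (x / y) := by
      rw [Real.log_div (by positivity) hx.ne', Real.log_mul hr.ne' hy.ne',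
        Real.log_div hx.ne' hy.ne']
      ring
    have h3 : Real.log r - Real.log (x / y) ≤ r * y / x - 1 := h2 ▸ h1
    have h4 := mul_le_mul_of_nonneg_left h3 hx.le
    have hx' : x * (r * y / x) = r * y := by field_simp
    nlinarith [h4]
  have k1 := key a b ha hb
  have k2 := key c d hc hd
  have hsum : r * b + r * d = a + c := by
    have : r * (b + d) = a + c := by rw [hrdef]; field_simp
    linarith [this, mul_add r b d]
  linarith [k1, k2, hsum]

/-- Convexity of the kinetic energy `m²/(2ρ)` in `(ρ, m)` for `ρ > 0`. -/
lemma kinetic_convex {ρ₁ m₁ ρ₂ m₂ a b : ℝ} (h1 : 0 < ρ₁) (h2 : 0 < ρ₂)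
    (ha : 0 ≤ a) (hb : 0 ≤ b) (hab : a + b = 1) :
    (a * m₁ + b * m₂) ^ 2 / (2 * (a * ρ₁ + b * ρ₂)) ≤
      a * (m₁ ^ 2 / (2 * ρ₁)) + b * (m₂ ^ 2 / (2 * ρ₂)) := by
  have hρ : 0 < a * ρ₁ + b * ρ₂ := by
    rcases lt_or_eq_of_le ha with ha' | ha'
    · have : 0 ≤ b * ρ₂ := mul_nonneg hb h2.le
      nlinarith
    · have hb1 : b = 1 := by linarith
      rw [← ha', hb1]; simpa using h2
  rw [div_le_iff₀ (by positivity)]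
  have key : 2 * m₁ * m₂ * (ρ₁ * ρ₂) ≤ m₁ ^ 2 * ρ₂ ^ 2 + m₂ ^ 2 * ρ₁ ^ 2 := by
    nlinarith [sq_nonneg (m₁ * ρ₂ - m₂ * ρ₁)]
  have e1 : a * (m₁ ^ 2 / (2 * ρ₁)) = a * m₁ ^ 2 / (2 * ρ₁) := by ring
  have expand : a * (m₁ ^ 2 / (2 * ρ₁)) + b * (m₂ ^ 2 / (2 * ρ₂)) =
      (a * m₁ ^ 2 * ρ₂ + b * m₂ ^ 2 * ρ₁) / (2 * ρ₁ * ρ₂) := by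
    field_simp
  rw [expand, div_mul_eq_mul_div, le_div_iff₀ (by positivity)]
  nlinarith [mul_nonneg (mul_nonneg ha hb) (sq_nonneg (m₁ * ρ₂ - m₂ * ρ₁)), mul_pos h1 h2]

/-- Rewriting of the entropy in a convenient additive form. -/
lemma eta_eq {γ ρ n : ℝ} (hγ : 1 < γ) (hρ : 0 < ρ) (hn : 0 < n) :
    -ρ * Real.log ((γ - 1) * n / ρ ^ γ) =
      ρ * Real.log (ρ / n) + (γ - 1) * (ρ * Real.log ρ) - ρ * Real.log (γ - 1) := by
  have hγ' : 0 < γ - 1 := by linarith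
  rw [Real.log_div (by positivity) (by positivity), Real.log_mul hγ'.ne' hn.ne',
    Real.log_rpow hρ, Real.log_div hρ.ne' hn.ne']
  ring

/-- The mathematical entropy `η(U) = -ρ log s` is convex in the conservative
variables `(ρ, m, Ẽ)` for a γ-law perfect gas. -/
theorem entropy_convex_in_conservative_variables
    (γ : ℝ) (hγ1 : 1 < γ) (hγ3 : γ ≤ 3) :
    ConvexOn ℝ {U : ℝ × ℝ × ℝ | 0 < U.1 ∧ 0 < U.2.2 - U.2.1 ^ 2 / (2 * U.1)}
      (fun U : ℝ × ℝ × ℝ =>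
        -U.1 * Real.log ((γ - 1) * (U.2.2 - U.2.1 ^ 2 / (2 * U.1)) / U.1 ^ γ)) := by
  have hγ : 0 < γ - 1 := by linarith
  constructor
  · -- the domain is convex
    intro x hx y hy a b ha hb hab
    obtain ⟨hx1, hx2⟩ := hx
    obtain ⟨hy1, hy2⟩ := hy
    have hρ : 0 < a * x.1 + b * y.1 := by
      rcases lt_or_eq_of_le ha with ha' | ha'
      · have : 0 ≤ b * y.1 := mul_nonneg hb hy1.le
        nlinarith
      · have hb1 : b = 1 := by linarith
        rw [← ha', hb1]; simpa using hy1
    have hk := kinetic_convex (m₁ := x.2.1) (m₂ := y.2.1) hx1 hy1 ha hb hab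
    constructor
    · simpa [Prod.fst_add, Prod.smul_fst, smul_eq_mul] using hρ
    · have : 0 < (a * x.2.2 + b * y.2.2) -
          (a * x.2.1 + b * y.2.1) ^ 2 / (2 * (a * x.1 + b * y.1)) := by
        have h1 : a * (x.2.2 - x.2.1 ^ 2 / (2 * x.1)) + b * (y.2.2 - y.2.1 ^ 2 / (2 * y.1))
            ≤ (a * x.2.2 + b * y.2.2) -
              (a * x.2.1 + b * y.2.1) ^ 2 / (2 * (a * x.1 + b * y.1)) := by
          nlinarith [hk]
        have h2 : 0 < a * (x.2.2 - x.2.1 ^ 2 / (2 * x.1)) +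
            b * (y.2.2 - y.2.1 ^ 2 / (2 * y.1)) := by
          rcases lt_or_eq_of_le ha with ha' | ha'
          · have : 0 ≤ b * (y.2.2 - y.2.1 ^ 2 / (2 * y.1)) := mul_nonneg hb hy2.le
            nlinarith
          · have hb1 : b = 1 := by linarith
            rw [← ha', hb1]; simpa using hy2
        linarith
      simpa [Prod.fst_add, Prod.snd_add, Prod.smul_fst, Prod.smul_snd, smul_eq_mul] using this
  · -- the convexity inequality
    intro x hx y hy a b ha hb hab
    obtain ⟨hx1, hx2⟩ := hx
    obtain ⟨hy1, hy2⟩ := hy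
    rcases eq_or_lt_of_le ha with ha0 | ha'
    · have hb1 : b = 1 := by linarith
      simp [← ha0, hb1]
    rcases eq_or_lt_of_le hb with hb0 | hb'
    · have ha1 : a = 1 := by linarith
      simp [← hb0, ha1]
    -- now 0 < a, 0 < b
    set ρ₁ := x.1; set m₁ := x.2.1; set E₁ := x.2.2
    set ρ₂ := y.1; set m₂ := y.2.1; set E₂ := y.2.2
    set n₁ := E₁ - m₁ ^ 2 / (2 * ρ₁) with hn₁def
    set n₂ := E₂ - m₂ ^ 2 / (2 * ρ₂) with hn₂def
    set ρ := a * ρ₁ + b * ρ₂ with hρdef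
    set n := (a * E₁ + b * E₂) - (a * m₁ + b * m₂) ^ 2 / (2 * ρ) with hndef
    have hρ : 0 < ρ := by positivity
    have hk := kinetic_convex (m₁ := m₁) (m₂ := m₂) hx1 hy1 ha hb hab
    have hnge : a * n₁ + b * n₂ ≤ n := by
      rw [hndef, hn₁def, hn₂def]; nlinarith [hk]
    have hnpos : 0 < n := by nlinarith [mul_pos ha' hx2, mul_pos hb' hy2]
    -- rewrite all three values of the function
    have hcomp : a • x + b • y = (ρ, a * m₁ + b * m₂, a * E₁ + b * E₂) := by
      simp [Prod.ext_iff, Prod.fst_add, Prod.snd_add, Prod.smul_fst, Prod.smul_snd,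
        smul_eq_mul, hρdef]
      exact ⟨rfl, rfl, rfl⟩
    rw [hcomp]
    show -ρ * Real.log ((γ - 1) * ((a * E₁ + b * E₂) - (a * m₁ + b * m₂) ^ 2 / (2 * ρ)) / ρ ^ γ)
      ≤ a • (-ρ₁ * Real.log ((γ - 1) * n₁ / ρ₁ ^ γ)) + b • (-ρ₂ * Real.log ((γ - 1) * n₂ / ρ₂ ^ γ))
    rw [smul_eq_mul, smul_eq_mul, ← hndef, eta_eq hγ1 hρ hnpos, eta_eq hγ1 hx1 hx2,
      eta_eq hγ1 hy1 hy2]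
    -- key inequality 1 : ρ log(ρ/n) ≤ a ρ₁ log(ρ₁/n₁) + b ρ₂ log(ρ₂/n₂)
    have hna : 0 < a * n₁ + b * n₂ := by positivity
    have step1 : ρ * Real.log (ρ / n) ≤ ρ * Real.log (ρ / (a * n₁ + b * n₂)) := by
      apply mul_le_mul_of_nonneg_left _ hρ.le
      apply Real.log_le_log (by positivity)
      exact div_le_div_of_nonneg_left hρ.le hna hnge
    have step2 : ρ * Real.log (ρ / (a * n₁ + b * n₂)) ≤
        a * (ρ₁ * Real.log (ρ₁ / n₁)) + b * (ρ₂ * Real.log (ρ₂ / n₂)) := by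
      have := log_sum_ineq (a := a * ρ₁) (b := a * n₁) (c := b * ρ₂) (d := b * n₂)
        (by positivity) (by positivity) (by positivity) (by positivity)
      rw [mul_div_mul_left _ _ ha'.ne', mul_div_mul_left _ _ hb'.ne'] at this
      calc ρ * Real.log (ρ / (a * n₁ + b * n₂))
          = (a * ρ₁ + b * ρ₂) * Real.log ((a * ρ₁ + b * ρ₂) / (a * n₁ + b * n₂)) := by
            rw [hρdef]
        _ ≤ a * ρ₁ * Real.log (ρ₁ / n₁) + b * ρ₂ * Real.log (ρ₂ / n₂) := this
        _ = a * (ρ₁ * Real.log (ρ₁ / n₁)) + b * (ρ₂ * Real.log (ρ₂ / n₂)) := by ring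
    -- key inequality 2 : ρ log ρ ≤ a ρ₁ log ρ₁ + b ρ₂ log ρ₂
    have step3 : ρ * Real.log ρ ≤ a * (ρ₁ * Real.log ρ₁) + b * (ρ₂ * Real.log ρ₂) := by
      have := log_sum_ineq (a := a * ρ₁) (b := a) (c := b * ρ₂) (d := b)
        (by positivity) ha' (by positivity) hb'
      rw [mul_div_cancel_left₀ _ ha'.ne', mul_div_cancel_left₀ _ hb'.ne', hab, div_one] at this
      calc ρ * Real.log ρ = (a * ρ₁ + b * ρ₂) * Real.log (a * ρ₁ + b * ρ₂) := by rw [hρdef]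
        _ ≤ a * ρ₁ * Real.log ρ₁ + b * ρ₂ * Real.log ρ₂ := this
        _ = a * (ρ₁ * Real.log ρ₁) + b * (ρ₂ * Real.log ρ₂) := by ring
    have hlin : ρ * Real.log (γ - 1) =
        a * (ρ₁ * Real.log (γ - 1)) + b * (ρ₂ * Real.log (γ - 1)) := by
      rw [hρdef]; ring
    have final := mul_le_mul_of_nonneg_left step3 hγ.le
    have expand : a * (ρ₁ * Real.log (ρ₁ / n₁) + (γ - 1) * (ρ₁ * Real.log ρ₁) -
          ρ₁ * Real.log (γ - 1)) +
        b * (ρ₂ * Real.log (ρ₂ / n₂) + (γ - 1) * (ρ₂ * Real.log ρ₂) - ρ₂ * Real.log (γ - 1)) =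
        (a * (ρ₁ * Real.log (ρ₁ / n₁)) + b * (ρ₂ * Real.log (ρ₂ / n₂))) +
          (γ - 1) * (a * (ρ₁ * Real.log ρ₁) + b * (ρ₂ * Real.log ρ₂)) -
          ρ * Real.log (γ - 1) := by
      rw [hρdef]; ring
    rw [expand]
    clear_value n ρ n₁ n₂ ρ₁ m₁ E₁ ρ₂ m₂ E₂
    linarith [step1, step2, final]
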